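/- No infinite abelian group all of whose elements have finite order, with all p-subgroups finite and with nontrivial p-subgroups for infinitely many primes p, can have the property that every two subgroups of equal order and equal index are isomorphic. Specifically, in such a group G one can find subgroups H₁ ≤ H₂ with H₂ = ⟨H₁, x⟩ for an element x of prime order p, H₁ containing no element of order p, |H₁| = |H₂| infinite, and |G : H₁| = |G : H₂| infinite, so H₁ ≇ H₂. -/
import Mathlib

open Subgroup QuotientGroup

/-- The subgroup of a commutative group consisting of elements all of whose order's
prime factors lie in `A`. -/
def pfSubgroup (G : Type*) [CommGroup G] (A : Set ℕ) : Subgroup G where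
  carrier := {g | ∀ r : ℕ, r.Prime → r ∣ orderOf g → r ∈ A}
  one_mem' := by
    intro r hr hdvd
    rw [orderOf_one, Nat.dvd_one] at hdvd
    exact absurd (hdvd ▸ hr) Nat.not_prime_one
  mul_mem' := by
    intro a b ha hb r hr hdvd
    have h1 : orderOf (a * b) ∣ Nat.lcm (orderOf a) (orderOf b) :=
      (Commute.all a b).orderOf_mul_dvd_lcm
    have h2 : r ∣ orderOf a * orderOf b :=
      dvd_trans hdvd (h1.trans (Nat.lcm_dvd_mul _ _))
    rcases hr.dvd_mul.mp h2 with h | h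
    · exact ha r hr h
    · exact hb r hr h
  inv_mem' := by
    intro a ha r hr hdvd
    rw [orderOf_inv] at hdvd
    exact ha r hr hdvd

lemma mem_pfSubgroup {G : Type*} [CommGroup G] {A : Set ℕ} {g : G} :
    g ∈ pfSubgroup G A ↔ ∀ r : ℕ, r.Prime → r ∣ orderOf g → r ∈ A := Iff.rfl

/-- In an infinite abelian torsion group with all p-subgroups finite and nontrivial
p-subgroups for infinitely many primes, there are subgroups H₁ ≤ H₂ = ⟨H₁, x⟩ with x of
prime order p, H₁ having no element of order p, of equal (infinite) order and equal
(infinite) index, yet non-isomorphic.  In particular such a group does not have the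
property that any two subgroups of equal order and index are isomorphic. -/
theorem stmt_8 (G : Type*) [CommGroup G] [Infinite G]
    (htor : ∀ g : G, IsOfFinOrder g)
    (hpfin : ∀ p : ℕ, p.Prime → ∀ P : Subgroup G, IsPGroup p P → Finite P)
    (hinf : {p : ℕ | p.Prime ∧ ∃ g : G, orderOf g = p ∧ g ≠ 1}.Infinite) :
    ∃ (p : ℕ) (_ : p.Prime) (H₁ H₂ : Subgroup G) (x : G),
      orderOf x = p ∧
      H₁ ≤ H₂ ∧
      H₂ = H₁ ⊔ Subgroup.zpowers x ∧
      (∀ h ∈ H₁, orderOf h ≠ p) ∧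
      Infinite H₁ ∧
      Cardinal.mk H₁ = Cardinal.mk H₂ ∧
      Infinite (G ⧸ H₁) ∧
      Cardinal.mk (G ⧸ H₁) = Cardinal.mk (G ⧸ H₂) ∧
      ¬ Nonempty (H₁ ≃* H₂) := by
  classical
  set S : Set ℕ := {p | p.Prime ∧ ∃ g : G, orderOf g = p ∧ g ≠ 1} with hSdef
  obtain ⟨p, hpS⟩ := hinf.nonempty
  obtain ⟨hp, x, hx, hx1⟩ := hpS
  have hS' : (S \ {p}).Infinite := hinf.diff (Set.finite_singleton p)
  let f : ℕ ↪ (S \ {p} : Set ℕ) := hS'.natEmbedding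
  set A : Set ℕ := Set.range fun n => (f (2 * n) : ℕ) with hAdef
  have hAS : A ⊆ S \ {p} := by rintro q ⟨n, rfl⟩; exact (f (2 * n)).2
  have hAinf : A.Infinite := Set.infinite_range_of_injective (by
    intro m n h
    have := f.injective (Subtype.coe_injective h)
    omega)
  set B : Set ℕ := (S \ {p}) \ A with hBdef
  have hBinf : B.Infinite := by
    apply Set.Infinite.mono (s := Set.range fun n => (f (2 * n + 1) : ℕ))
    · rintro q ⟨n, rfl⟩
      refine ⟨(f (2 * n + 1)).2, ?_⟩
      rintro ⟨m, hm⟩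
      have := f.injective (Subtype.coe_injective hm)
      omega
    · exact Set.infinite_range_of_injective (by
        intro m n h
        have := f.injective (Subtype.coe_injective h)
        omega)
  set H₁ : Subgroup G := pfSubgroup G A with hH₁def
  set H₂ : Subgroup G := H₁ ⊔ Subgroup.zpowers x with hH₂def
  have hpA : p ∉ A := fun h => (hAS h).2 rfl
  -- H₁ has no element of order p
  have hnoP : ∀ h ∈ H₁, orderOf h ≠ p := by
    intro h hh heq
    exact hpA (hh p hp (heq ▸ dvd_refl p))
  -- elements of prime order q ∈ A lie in H₁
  have hgen : ∀ q : A, ∃ g : G, orderOf g = (q : ℕ) ∧ g ∈ H₁ := by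
    rintro ⟨q, hq⟩
    obtain ⟨hqp, g, hg, -⟩ := (hAS hq).1
    refine ⟨g, hg, ?_⟩
    intro r hr hrd
    rw [hg] at hrd
    rwa [(Nat.prime_dvd_prime_iff_eq hr hqp).mp hrd]
  choose gg hgg1 hgg2 using hgen
  have hAinfCoe : Infinite A := Set.infinite_coe_iff.mpr hAinf
  have hH₁inf : Infinite H₁ := by
    refine Infinite.of_injective (fun q : A => (⟨gg q, hgg2 q⟩ : H₁)) ?_
    intro q q' h
    have h' : gg q = gg q' := congrArg Subtype.val h
    have : orderOf (gg q) = orderOf (gg q') := by rw [h']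
    rw [hgg1 q, hgg1 q'] at this
    exact Subtype.ext this
  have hle : H₁ ≤ H₂ := le_sup_left
  have hxH₂ : x ∈ H₂ := Subgroup.mem_sup_right (Subgroup.mem_zpowers x)
  -- zpowers x is finite
  have hzfin : (Subgroup.zpowers x : Set G).Finite := finite_zpowers.mpr (htor x)
  have hzfin' : Finite (Subgroup.zpowers x) := hzfin
  -- the quotient H₂ / H₁ is finite
  have hQfin : Finite (H₂ ⧸ H₁.subgroupOf H₂) := by
    refine Finite.of_surjective
      (fun z : Subgroup.zpowers x =>
        (QuotientGroup.mk (⟨(z : G), Subgroup.mem_sup_right z.2⟩ : H₂) : H₂ ⧸ H₁.subgroupOf H₂)) ?_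
    intro q
    obtain ⟨⟨g, hg⟩, rfl⟩ := QuotientGroup.mk_surjective q
    obtain ⟨y, hy, z, hz, rfl⟩ := Subgroup.mem_sup.mp hg
    refine ⟨⟨z, hz⟩, ?_⟩
    rw [QuotientGroup.eq]
    rw [Subgroup.mem_subgroupOf]
    simpa using (inv_mem hy : y⁻¹ ∈ H₁)
  -- cardinalities of H₁ and H₂ agree
  have hmkH₁H₂ : Cardinal.mk H₁ = Cardinal.mk H₂ := by
    have e2 : H₂ ≃ (H₂ ⧸ H₁.subgroupOf H₂) × (H₁.subgroupOf H₂) :=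
      Subgroup.groupEquivQuotientProdSubgroup
    have e3 : (H₁.subgroupOf H₂) ≃* H₁ := Subgroup.subgroupOfEquivOfLe hle
    have h1 : Cardinal.mk H₂ = Cardinal.mk (H₂ ⧸ H₁.subgroupOf H₂) * Cardinal.mk H₁ := by
      rw [Cardinal.mk_congr e2, Cardinal.mk_prod, Cardinal.lift_id, Cardinal.lift_id,
        Cardinal.mk_congr e3.toEquiv]
    rw [h1]
    refine (Cardinal.mul_eq_right ?_ ?_ ?_).symm
    · exact Cardinal.infinite_iff.mp hH₁inf
    · exact le_trans (Cardinal.lt_aleph0_of_finite _).le (Cardinal.infinite_iff.mp hH₁inf)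
    · exact Cardinal.mk_ne_zero _
  -- G / H₁ is infinite
  have hBgen : ∀ q : B, ∃ g : G ⧸ H₁, orderOf g = (q : ℕ) := by
    rintro ⟨q, hq⟩
    obtain ⟨hqp, g, hg, -⟩ := hq.1.1
    refine ⟨QuotientGroup.mk g, ?_⟩
    have hd : orderOf (QuotientGroup.mk g : G ⧸ H₁) ∣ q := by
      rw [← hg]; exact orderOf_map_dvd (QuotientGroup.mk' H₁) g
    rcases (Nat.dvd_prime hqp).mp hd with h1 | h1
    · exfalso
      have : (QuotientGroup.mk g : G ⧸ H₁) = 1 := orderOf_eq_one_iff.mp h1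
      have hgH₁ : g ∈ H₁ := (QuotientGroup.eq_one_iff g).mp this
      have : q ∈ A := hgH₁ q hqp (hg ▸ dvd_refl q)
      exact hq.2 this
    · exact h1
  choose qg hqg using hBgen
  have hBinfCoe : Infinite B := Set.infinite_coe_iff.mpr hBinf
  have hGH₁inf : Infinite (G ⧸ H₁) := by
    refine Infinite.of_injective qg ?_
    intro q q' h
    have : orderOf (qg q) = orderOf (qg q') := by rw [h]
    rw [hqg q, hqg q'] at this
    exact Subtype.ext this
  -- the image of H₂ in G / H₁ is finite
  set K : Subgroup (G ⧸ H₁) := H₂.map (QuotientGroup.mk' H₁) with hKdef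
  have hKfin : Finite K := by
    refine Finite.of_surjective
      (fun z : Subgroup.zpowers x =>
        (⟨QuotientGroup.mk (z : G), ⟨(z : G), Subgroup.mem_sup_right z.2, rfl⟩⟩ : K)) ?_
    rintro ⟨y, hy⟩
    obtain ⟨g, hg, rfl⟩ := hy
    obtain ⟨a, ha, z, hz, rfl⟩ := Subgroup.mem_sup.mp hg
    refine ⟨⟨z, hz⟩, ?_⟩
    apply Subtype.ext
    show (QuotientGroup.mk z : G ⧸ H₁) = QuotientGroup.mk (a * z)
    rw [QuotientGroup.eq]
    simpa [mul_comm, mul_assoc] using (inv_mem ha : a⁻¹ ∈ H₁)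
  have e4 : (G ⧸ H₁) ⧸ K ≃* G ⧸ H₂ := QuotientGroup.quotientQuotientEquivQuotient H₁ H₂ hle
  have e5 : (G ⧸ H₁) ≃ ((G ⧸ H₁) ⧸ K) × K := Subgroup.groupEquivQuotientProdSubgroup
  have hGH₂inf : Infinite (G ⧸ H₂) := by
    by_contra hfin
    rw [not_infinite_iff_finite] at hfin
    have : Finite ((G ⧸ H₁) ⧸ K) := Finite.of_equiv _ e4.toEquiv.symm
    have : Finite (G ⧸ H₁) := Finite.of_equiv _ e5.symm
    exact not_finite (G ⧸ H₁)
  have hmkQ : Cardinal.mk (G ⧸ H₁) = Cardinal.mk (G ⧸ H₂) := by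
    have h1 : Cardinal.mk (G ⧸ H₁) = Cardinal.mk (G ⧸ H₂) * Cardinal.mk K := by
      rw [Cardinal.mk_congr e5, Cardinal.mk_prod, Cardinal.lift_id, Cardinal.lift_id,
        Cardinal.mk_congr e4.toEquiv]
    rw [h1]
    refine Cardinal.mul_eq_left ?_ ?_ ?_
    · exact Cardinal.infinite_iff.mp hGH₂inf
    · exact le_trans (Cardinal.lt_aleph0_of_finite _).le (Cardinal.infinite_iff.mp hGH₂inf)
    · exact Cardinal.mk_ne_zero _
  -- non-isomorphism
  have hniso : ¬ Nonempty (H₁ ≃* H₂) := by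
    rintro ⟨e⟩
    set y : H₁ := e.symm ⟨x, hxH₂⟩ with hydef
    have h1 : orderOf y = orderOf (⟨x, hxH₂⟩ : H₂) :=
      orderOf_injective e.symm.toMonoidHom e.symm.injective _
    have h2 : orderOf (⟨x, hxH₂⟩ : H₂) = orderOf x := Subgroup.orderOf_mk x hxH₂
    have h3 : orderOf (y : G) = orderOf y := Subgroup.orderOf_coe y
    exact hnoP (y : G) y.2 (by rw [h3, h1, h2, hx])
  exact ⟨p, hp, H₁, H₂, x, hx, hle, rfl, hnoP, hH₁inf, hmkH₁H₂, hGH₁inf, hmkQ, hniso⟩
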